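/- arXiv:1907.02810 — 3 statements merged into one kernel-verified Lean document; each statement's English description precedes it below -/
import Mathlib

section
/- Let L, B > 0 and let u : ℝ² → ℝ be three times continuously differentiable on the closure of Ω = (0,L)×(−B,B), satisfying u(x,−B)=u(x,B)=0 for x∈[0,L], u(0,y)=u(L,y)=0 for y∈[−B,B], and ∂_x u(L,y)=0 for y∈[−B,B]. Then 2∫_Ω (1+x) u (∂_x u + ∂_x³ u + ∂_x∂_y² u) dx dy = ∫_{−B}^{B} (∂_x u(0,y))² dy + ∫_Ω ((∂_x u)² + (∂_y u)²) dx dy + 2∫_Ω (∂_x u)² dx dy − ∫_Ω u² dx dy. -/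
open MeasureTheory

/-- The open rectangle `Ω = (0,L) × (-B,B)`. -/
def omega7 (L B : ℝ) : Set (ℝ × ℝ) := Set.Ioo 0 L ×ˢ Set.Ioo (-B) B

/-- The closed rectangle `[0,L] × [-B,B]`, the closure of `Ω`. -/
def closRect7 (L B : ℝ) : Set (ℝ × ℝ) := Set.Icc 0 L ×ˢ Set.Icc (-B) B

/-- Partial derivative of `u` in `x`, computed within the closed rectangle. -/
noncomputable def pdx7 (L B : ℝ) (u : ℝ × ℝ → ℝ) (z : ℝ × ℝ) : ℝ :=
  fderivWithin ℝ u (closRect7 L B) z (1, 0)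

/-- Partial derivative of `u` in `y`, computed within the closed rectangle. -/
noncomputable def pdy7 (L B : ℝ) (u : ℝ × ℝ → ℝ) (z : ℝ × ℝ) : ℝ :=
  fderivWithin ℝ u (closRect7 L B) z (0, 1)

/-- Third partial derivative `u_{xxx}`, computed within the closed rectangle. -/
noncomputable def pdxxx7 (L B : ℝ) (u : ℝ × ℝ → ℝ) (z : ℝ × ℝ) : ℝ :=
  iteratedFDerivWithin ℝ 3 u (closRect7 L B) z ![(1, 0), (1, 0), (1, 0)]

/-- Mixed third partial derivative `u_{xyy}`, computed within the closed rectangle. -/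
noncomputable def pdxyy7 (L B : ℝ) (u : ℝ × ℝ → ℝ) (z : ℝ × ℝ) : ℝ :=
  iteratedFDerivWithin ℝ 3 u (closRect7 L B) z ![(1, 0), (0, 1), (0, 1)]

noncomputable def uxxW (L B : ℝ) (u : ℝ × ℝ → ℝ) (z : ℝ × ℝ) : ℝ :=
  fderivWithin ℝ (pdx7 L B u) (closRect7 L B) z (1, 0)
noncomputable def uyyW (L B : ℝ) (u : ℝ × ℝ → ℝ) (z : ℝ × ℝ) : ℝ :=
  fderivWithin ℝ (pdy7 L B u) (closRect7 L B) z (0, 1)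

noncomputable def FF7 (L B : ℝ) (u : ℝ × ℝ → ℝ) (z : ℝ × ℝ) : ℝ :=
  (1 + z.1) * (u z * u z) + (1 + z.1) * (2 * (u z * uxxW L B u z) - pdx7 L B u z * pdx7 L B u z)
    - 2 * (u z * pdx7 L B u z) + (2 * (1 + z.1)) * (u z * uyyW L B u z)
    + (1 + z.1) * (pdy7 L B u z * pdy7 L B u z)

noncomputable def GG7 (L B : ℝ) (u : ℝ × ℝ → ℝ) (z : ℝ × ℝ) : ℝ :=
  -(2 * (u z * pdy7 L B u z) + (2 * (1 + z.1)) * (pdx7 L B u z * pdy7 L B u z))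

section interiorlemma

lemma interior_closRect7 (L B : ℝ) : interior (closRect7 L B) = omega7 L B := by
  unfold closRect7 omega7
  rw [interior_prod_eq, interior_Icc, interior_Icc]

lemma uniqueDiffOn_closRect7 {L B : ℝ} (hL : 0 < L) (hB : 0 < B) :
    UniqueDiffOn ℝ (closRect7 L B) := by
  apply uniqueDiffOn_convex ((convex_Icc _ _).prod (convex_Icc _ _))
  show (interior (closRect7 L B)).Nonempty
  rw [interior_closRect7]
  exact ⟨(L/2, 0), by constructor <;> constructor <;> [linarith; linarith; linarith; linarith]⟩

lemma init3' {α : Type*} (a b c : α) : Fin.init ![a,b,c] = ![a,b] := by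
  funext i; fin_cases i <;> rfl
lemma init2' {α : Type*} (a b : α) : Fin.init ![a,b] = ![a] := by
  funext i; fin_cases i <;> rfl

lemma iter3_interior {L B : ℝ} {u : ℝ × ℝ → ℝ} {z : ℝ × ℝ}
    (hz : z ∈ interior (closRect7 L B)) (v1 v2 v3 : ℝ × ℝ) :
    iteratedFDerivWithin ℝ 3 u (closRect7 L B) z ![v1, v2, v3]
      = fderiv ℝ (fderiv ℝ (fderiv ℝ u)) z v1 v2 v3 := by
  have h1 : iteratedFDerivWithin ℝ 3 u (closRect7 L B) z
      = iteratedFDeriv ℝ 3 u z := by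
    rw [← iteratedFDerivWithin_inter_open isOpen_interior hz,
      Set.inter_eq_self_of_subset_right interior_subset,
      iteratedFDerivWithin_of_isOpen 3 isOpen_interior hz]
  rw [h1, iteratedFDeriv_succ_apply_right, init3', iteratedFDeriv_succ_apply_right, init2',
    iteratedFDeriv_one_apply]
  rfl

set_option maxHeartbeats 2000000 in
lemma interior_div7 {L B : ℝ} {u : ℝ × ℝ → ℝ}
    (hu : ContDiffOn ℝ 3 u (closRect7 L B)) {z : ℝ × ℝ} (hz : z ∈ omega7 L B) :
    ∃ CF CG : (ℝ × ℝ) →L[ℝ] ℝ, HasFDerivAt (FF7 L B u) CF z ∧ HasFDerivAt (GG7 L B u) CG z ∧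
      CF (1, 0) + CG (0, 1)
        = 2 * ((1 + z.1) * u z * (pdx7 L B u z + pdxxx7 L B u z + pdxyy7 L B u z))
          + u z ^ 2 - 3 * pdx7 L B u z ^ 2 - pdy7 L B u z ^ 2 := by
  have hzi : z ∈ interior (closRect7 L B) := by rw [interior_closRect7]; exact hz
  have hsnz : closRect7 L B ∈ nhds z := mem_interior_iff_mem_nhds.1 hzi
  have h3 : ContDiffAt ℝ 3 u z := hu.contDiffAt hsnz
  set vx : ℝ × ℝ := (1, 0) with hvx
  set vy : ℝ × ℝ := (0, 1) with hvy
  set N1 := fderiv ℝ u with hN1def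
  set N2 := fderiv ℝ N1 with hN2def
  set N3 := fderiv ℝ N2 with hN3def
  have hN1 : ContDiffAt ℝ 2 N1 z := h3.fderiv_right (by norm_num)
  have hN2 : ContDiffAt ℝ 1 N2 z := hN1.fderiv_right (by norm_num)
  have hfdW : ∀ w ∈ interior (closRect7 L B), fderivWithin ℝ u (closRect7 L B) w = N1 w :=
    fun w hw => fderivWithin_of_mem_nhds (mem_interior_iff_mem_nhds.1 hw)
  have hev_int : ∀ᶠ w in nhds z, w ∈ interior (closRect7 L B) :=
    isOpen_interior.mem_nhds hzi
  have hpx_ev : pdx7 L B u =ᶠ[nhds z] fun w => N1 w vx := by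
    filter_upwards [hev_int] with w hw
    simp only [pdx7, hfdW w hw, hvx]
  have hpy_ev : pdy7 L B u =ᶠ[nhds z] fun w => N1 w vy := by
    filter_upwards [hev_int] with w hw
    simp only [pdy7, hfdW w hw, hvy]
  have hev1 : ∀ᶠ w in nhds z, DifferentiableAt ℝ N1 w := by
    filter_upwards [hN1.eventually (by simp)] with w hw
    exact hw.differentiableAt two_ne_zero
  -- second derivatives eventually
  have hq_ev : ∀ v : ℝ × ℝ,
      (fun w => fderivWithin ℝ (fun w' => fderivWithin ℝ u (closRect7 L B) w' v)
        (closRect7 L B) w v) =ᶠ[nhds z] fun w => N2 w v v := by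
    intro v
    filter_upwards [hev_int, hev1] with w hw hdw
    have hw_nhds : closRect7 L B ∈ nhds w := mem_interior_iff_mem_nhds.1 hw
    have hinner : (fun w' => fderivWithin ℝ u (closRect7 L B) w' v) =ᶠ[nhds w]
        fun w' => N1 w' v := by
      filter_upwards [isOpen_interior.mem_nhds hw] with w' hw'
      rw [hfdW w' hw']
    have hcomp : HasFDerivAt (fun w' => N1 w' v)
        ((ContinuousLinearMap.apply ℝ ℝ v).comp (N2 w)) w :=
      ((ContinuousLinearMap.apply ℝ ℝ v).hasFDerivAt).comp w hdw.hasFDerivAt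
    rw [fderivWithin_of_mem_nhds hw_nhds, hinner.fderiv_eq, hcomp.fderiv]
    simp
  have hqxx_ev : uxxW L B u =ᶠ[nhds z] fun w => N2 w vx vx := hq_ev vx
  have hqyy_ev : uyyW L B u =ᶠ[nhds z] fun w => N2 w vy vy := hq_ev vy
  -- HasFDerivAt facts at z
  have hu0 : HasFDerivAt u (N1 z) z := (h3.differentiableAt (by norm_num)).hasFDerivAt
  have hx1 : HasFDerivAt (fun w : ℝ × ℝ => 1 + w.1) (ContinuousLinearMap.fst ℝ ℝ ℝ) z :=
    hasFDerivAt_fst.const_add 1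
  have hN1d : HasFDerivAt N1 (N2 z) z := (hN1.differentiableAt two_ne_zero).hasFDerivAt
  have hN2d : HasFDerivAt N2 (N3 z) z := (hN2.differentiableAt one_ne_zero).hasFDerivAt
  have hpx_d : HasFDerivAt (pdx7 L B u) ((N1 z).comp 0 + (N2 z).flip vx) z :=
    (hN1d.clm_apply (hasFDerivAt_const vx z)).congr_of_eventuallyEq hpx_ev
  have hpy_d : HasFDerivAt (pdy7 L B u) ((N1 z).comp 0 + (N2 z).flip vy) z :=
    (hN1d.clm_apply (hasFDerivAt_const vy z)).congr_of_eventuallyEq hpy_ev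
  have hq_apply : ∀ v : ℝ × ℝ, HasFDerivAt (fun w => N2 w v)
      ((N2 z).comp 0 + (N3 z).flip v) z :=
    fun v => hN2d.clm_apply (hasFDerivAt_const v z)
  have hqxx_d : HasFDerivAt (uxxW L B u)
      ((N2 z vx).comp 0 + ((N2 z).comp 0 + (N3 z).flip vx).flip vx) z :=
    ((hq_apply vx).clm_apply (hasFDerivAt_const vx z)).congr_of_eventuallyEq hqxx_ev
  have hqyy_d : HasFDerivAt (uyyW L B u)
      ((N2 z vy).comp 0 + ((N2 z).comp 0 + (N3 z).flip vy).flip vy) z :=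
    ((hq_apply vy).clm_apply (hasFDerivAt_const vy z)).congr_of_eventuallyEq hqyy_ev
  -- assemble
  have hF : HasFDerivAt (FF7 L B u) _ z :=
    ((((hx1.mul (hu0.mul hu0)).add
        (hx1.mul (((hu0.mul hqxx_d).const_mul 2).sub (hpx_d.mul hpx_d)))).sub
        ((hu0.mul hpx_d).const_mul 2)).add
        ((hx1.const_mul 2).mul (hu0.mul hqyy_d))).add
        (hx1.mul (hpy_d.mul hpy_d))
  have hG : HasFDerivAt (GG7 L B u) _ z :=
    (((hu0.mul hpy_d).const_mul 2).add
        ((hx1.const_mul 2).mul (hpx_d.mul hpy_d))).neg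
  refine ⟨_, _, hF, hG, ?_⟩
  have hsym : N2 z vy vx = N2 z vx vy := by
    have := (h3.isSymmSndFDerivAt (by norm_num)) vy vx
    simp only [← hN1def, ← hN2def] at this
    exact this
  have hx3 : pdxxx7 L B u z = N3 z vx vx vx := by
    simp only [pdxxx7]
    rw [iter3_interior hzi]
  have hy3 : pdxyy7 L B u z = N3 z vx vy vy := by
    simp only [pdxyy7]
    rw [iter3_interior hzi]
  rw [hx3, hy3, hpx_ev.eq_of_nhds, hpy_ev.eq_of_nhds, hqxx_ev.eq_of_nhds, hqyy_ev.eq_of_nhds]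
  simp only [ContinuousLinearMap.add_apply, ContinuousLinearMap.smul_apply,
    ContinuousLinearMap.sub_apply, ContinuousLinearMap.comp_apply,
    ContinuousLinearMap.apply_apply, ContinuousLinearMap.neg_apply, smul_eq_mul,
    ContinuousLinearMap.coe_fst', ContinuousLinearMap.coe_comp',
    ContinuousLinearMap.zero_apply, ContinuousLinearMap.flip_apply, map_zero,
    Pi.mul_apply, Pi.sub_apply, Pi.pow_apply, hpx_ev.eq_of_nhds, hpy_ev.eq_of_nhds,
    hqxx_ev.eq_of_nhds, hqyy_ev.eq_of_nhds, show vx.1 = 1 from rfl, show vy.1 = 0 from rfl]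
  rw [hsym]
  ring

end interiorlemma

section boundary

lemma dir_deriv_zero7 {L B : ℝ} {u : ℝ × ℝ → ℝ} (hu : ContDiffOn ℝ 3 u (closRect7 L B))
    {γ : ℝ → ℝ × ℝ} {v : ℝ × ℝ} {I : Set ℝ} {t : ℝ}
    (hγ : HasDerivWithinAt γ v I t) (hmaps : Set.MapsTo γ I (closRect7 L B))
    (hvals : ∀ r ∈ I, u (γ r) = 0) (hI : UniqueDiffWithinAt ℝ I t) (ht : t ∈ I) :
    fderivWithin ℝ u (closRect7 L B) (γ t) v = 0 := by
  have hd : DifferentiableWithinAt ℝ u (closRect7 L B) (γ t) :=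
    (hu.differentiableOn (by norm_num)) _ (hmaps ht)
  have h1 : HasDerivWithinAt (u ∘ γ) (fderivWithin ℝ u (closRect7 L B) (γ t) v) I t :=
    hd.hasFDerivWithinAt.comp_hasDerivWithinAt t hγ hmaps
  have h2 : HasDerivWithinAt (u ∘ γ) 0 I t :=
    (hasDerivWithinAt_const t I 0).congr (fun r hr => hvals r hr) (hvals t ht)
  rw [← h1.derivWithin hI, h2.derivWithin hI]

end boundary

set_option maxHeartbeats 1000000 in
/-- **Integration-by-parts identity for the linear part of the mZK operator with the
multiplier `(1+x)u`** (underlying identity (5.4) of Estimate II): for `u` three times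
continuously differentiable on the closure of `Ω = (0,L) × (-B,B)` with
`u(x,±B) = 0`, `u(0,y) = u(L,y) = 0` and `u_x(L,y) = 0`,
`2∫_Ω (1+x) u (u_x + u_xxx + u_xyy)
   = ∫_{-B}^{B} u_x(0,y)² dy + ∫_Ω (u_x² + u_y²) + 2∫_Ω u_x² − ∫_Ω u²`. -/
theorem linear_part_identity (L B : ℝ) (hL : 0 < L) (hB : 0 < B) (u : ℝ × ℝ → ℝ)
    (hu : ContDiffOn ℝ 3 u (closRect7 L B))
    (hbdy_y : ∀ x ∈ Set.Icc (0 : ℝ) L, u (x, -B) = 0 ∧ u (x, B) = 0)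
    (hbdy_x : ∀ y ∈ Set.Icc (-B) B, u ((0 : ℝ), y) = 0 ∧ u (L, y) = 0)
    (hbdy_ux : ∀ y ∈ Set.Icc (-B) B, pdx7 L B u (L, y) = 0) :
    2 * (∫ z in omega7 L B,
          (1 + z.1) * u z * (pdx7 L B u z + pdxxx7 L B u z + pdxyy7 L B u z))
      = (∫ y in (-B)..B, (pdx7 L B u (0, y)) ^ 2)
        + (∫ z in omega7 L B, ((pdx7 L B u z) ^ 2 + (pdy7 L B u z) ^ 2))
        + 2 * (∫ z in omega7 L B, (pdx7 L B u z) ^ 2)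
        - ∫ z in omega7 L B, (u z) ^ 2 := by
  have hBB : -B < B := by linarith
  have hsU : UniqueDiffOn ℝ (closRect7 L B) := uniqueDiffOn_closRect7 hL hB
  have hcompact : IsCompact (closRect7 L B) := isCompact_Icc.prod isCompact_Icc
  have hmeasΩ : MeasurableSet (omega7 L B) := measurableSet_Ioo.prod measurableSet_Ioo
  have hsub : omega7 L B ⊆ closRect7 L B := fun z hz =>
    ⟨Set.Ioo_subset_Icc_self hz.1, Set.Ioo_subset_Icc_self hz.2⟩
  -- boundary derivative values
  have huy0 : ∀ y ∈ Set.Icc (-B) B, pdy7 L B u (0, y) = 0 := fun y hy =>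
    dir_deriv_zero7 hu (γ := fun t => ((0:ℝ), t)) (I := Set.Icc (-B) B)
      (((hasDerivAt_const y (0:ℝ)).prodMk (hasDerivAt_id y)).hasDerivWithinAt)
      (fun t ht => ⟨⟨le_refl 0, hL.le⟩, ht⟩)
      (fun t ht => (hbdy_x t ht).1)
      (uniqueDiffOn_Icc hBB y hy) hy
  have huyL : ∀ y ∈ Set.Icc (-B) B, pdy7 L B u (L, y) = 0 := fun y hy =>
    dir_deriv_zero7 hu (γ := fun t => (L, t)) (I := Set.Icc (-B) B)
      (((hasDerivAt_const y L).prodMk (hasDerivAt_id y)).hasDerivWithinAt)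
      (fun t ht => ⟨⟨hL.le, le_refl L⟩, ht⟩)
      (fun t ht => (hbdy_x t ht).2)
      (uniqueDiffOn_Icc hBB y hy) hy
  have hux_bot : ∀ x ∈ Set.Icc (0:ℝ) L, pdx7 L B u (x, -B) = 0 := fun x hx =>
    dir_deriv_zero7 hu (γ := fun t => (t, -B)) (I := Set.Icc (0:ℝ) L)
      (((hasDerivAt_id x).prodMk (hasDerivAt_const x (-B))).hasDerivWithinAt)
      (fun t ht => ⟨ht, ⟨le_refl (-B), hBB.le⟩⟩)
      (fun t ht => (hbdy_y t ht).1)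
      (uniqueDiffOn_Icc hL x hx) hx
  have hux_top : ∀ x ∈ Set.Icc (0:ℝ) L, pdx7 L B u (x, B) = 0 := fun x hx =>
    dir_deriv_zero7 hu (γ := fun t => (t, B)) (I := Set.Icc (0:ℝ) L)
      (((hasDerivAt_id x).prodMk (hasDerivAt_const x B)).hasDerivWithinAt)
      (fun t ht => ⟨ht, ⟨hBB.le, le_refl B⟩⟩)
      (fun t ht => (hbdy_y t ht).2)
      (uniqueDiffOn_Icc hL x hx) hx
  -- boundary values of FF7 and GG7
  have hGtop : ∀ x ∈ Set.Icc (0:ℝ) L, GG7 L B u (x, B) = 0 := by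
    intro x hx
    simp only [GG7, (hbdy_y x hx).2, hux_top x hx]
    ring
  have hGbot : ∀ x ∈ Set.Icc (0:ℝ) L, GG7 L B u (x, -B) = 0 := by
    intro x hx
    simp only [GG7, (hbdy_y x hx).1, hux_bot x hx]
    ring
  have hFL : ∀ y ∈ Set.Icc (-B) B, FF7 L B u (L, y) = 0 := by
    intro y hy
    simp only [FF7, (hbdy_x y hy).2, hbdy_ux y hy, huyL y hy]
    ring
  have hF0 : ∀ y ∈ Set.Icc (-B) B, FF7 L B u ((0:ℝ), y) = -(pdx7 L B u (0, y))^2 := by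
    intro y hy
    simp only [FF7, (hbdy_x y hy).1, huy0 y hy]
    ring
  -- continuity
  have hcu : ContinuousOn u (closRect7 L B) := hu.continuousOn
  have hcx1 : ContinuousOn (fun z : ℝ × ℝ => 1 + z.1) (closRect7 L B) :=
    (continuous_const.add continuous_fst).continuousOn
  have h2x : ContDiffOn ℝ 2 (pdx7 L B u) (closRect7 L B) :=
    (hu.fderivWithin hsU (by norm_num)).clm_apply contDiffOn_const
  have h2y : ContDiffOn ℝ 2 (pdy7 L B u) (closRect7 L B) :=
    (hu.fderivWithin hsU (by norm_num)).clm_apply contDiffOn_const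
  have hcx : ContinuousOn (pdx7 L B u) (closRect7 L B) := h2x.continuousOn
  have hcy : ContinuousOn (pdy7 L B u) (closRect7 L B) := h2y.continuousOn
  have h1xx : ContDiffOn ℝ 1 (fderivWithin ℝ (pdx7 L B u) (closRect7 L B)) (closRect7 L B) :=
    h2x.fderivWithin hsU (by norm_num)
  have h1yy : ContDiffOn ℝ 1 (fderivWithin ℝ (pdy7 L B u) (closRect7 L B)) (closRect7 L B) :=
    h2y.fderivWithin hsU (by norm_num)
  have hcxx : ContinuousOn (uxxW L B u) (closRect7 L B) :=
    (h1xx.clm_apply contDiffOn_const).continuousOn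
  have hcyy : ContinuousOn (uyyW L B u) (closRect7 L B) :=
    (h1yy.clm_apply contDiffOn_const).continuousOn
  have hit : ContinuousOn (iteratedFDerivWithin ℝ 3 u (closRect7 L B)) (closRect7 L B) :=
    hu.continuousOn_iteratedFDerivWithin (by norm_num) hsU
  have hc3x : ContinuousOn (pdxxx7 L B u) (closRect7 L B) :=
    (continuous_eval_const _).comp_continuousOn hit
  have hc3y : ContinuousOn (pdxyy7 L B u) (closRect7 L B) :=
    (continuous_eval_const _).comp_continuousOn hit
  have hcF : ContinuousOn (FF7 L B u) (closRect7 L B) :=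
    ((((hcx1.mul (hcu.mul hcu)).add
        (hcx1.mul ((continuousOn_const.mul (hcu.mul hcxx)).sub (hcx.mul hcx)))).sub
        (continuousOn_const.mul (hcu.mul hcx))).add
        ((continuousOn_const.mul hcx1).mul (hcu.mul hcyy))).add
        (hcx1.mul (hcy.mul hcy))
  have hcG : ContinuousOn (GG7 L B u) (closRect7 L B) :=
    ((continuousOn_const.mul (hcu.mul hcy)).add
        ((continuousOn_const.mul hcx1).mul (hcx.mul hcy))).neg
  have hcphi : ContinuousOn (fun z =>
      2 * ((1 + z.1) * u z * (pdx7 L B u z + pdxxx7 L B u z + pdxyy7 L B u z))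
        + u z ^ 2 - 3 * pdx7 L B u z ^ 2 - pdy7 L B u z ^ 2) (closRect7 L B) :=
    (((continuousOn_const.mul ((hcx1.mul hcu).mul ((hcx.add hc3x).add hc3y))).add
        (hcu.pow 2)).sub (continuousOn_const.mul (hcx.pow 2))).sub (hcy.pow 2)
  -- measure facts
  have hnull : volume (closRect7 L B \ omega7 L B) = 0 := by
    have hsubd : closRect7 L B \ omega7 L B ⊆
        (({0, L} : Set ℝ) ×ˢ (Set.univ : Set ℝ)) ∪
          ((Set.univ : Set ℝ) ×ˢ ({-B, B} : Set ℝ)) := by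
      rintro z ⟨⟨h1, h2⟩, hzn⟩
      by_cases hx0 : 0 < z.1 ∧ z.1 < L
      · right
        refine ⟨trivial, ?_⟩
        by_contra hcon
        simp only [Set.mem_insert_iff, Set.mem_singleton_iff, not_or] at hcon
        exact hzn ⟨hx0, ⟨lt_of_le_of_ne h2.1 (Ne.symm hcon.1), lt_of_le_of_ne h2.2 hcon.2⟩⟩
      · left
        refine ⟨?_, trivial⟩
        rcases not_and_or.1 hx0 with h | h
        · exact Or.inl (le_antisymm (not_lt.1 h) h1.1)
        · exact Or.inr (le_antisymm h1.2 (not_lt.1 h))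
    refine measure_mono_null hsubd (measure_union_null ?_ ?_)
    · rw [Measure.volume_eq_prod, Measure.prod_prod,
        Set.Countable.measure_zero (Set.Countable.insert 0 (Set.countable_singleton L)) volume,
        zero_mul]
    · rw [Measure.volume_eq_prod, Measure.prod_prod,
        Set.Countable.measure_zero (Set.Countable.insert (-B) (Set.countable_singleton B)) volume,
        mul_zero]
  have haes : closRect7 L B =ᵐ[volume] omega7 L B := by
    refine (MeasureTheory.ae_eq_set).2 ⟨hnull, ?_⟩
    rw [Set.diff_eq_empty.2 hsub]
    exact measure_empty
  -- integrability
  have hIphi : IntegrableOn (fun z =>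
      2 * ((1 + z.1) * u z * (pdx7 L B u z + pdxxx7 L B u z + pdxyy7 L B u z))
        + u z ^ 2 - 3 * pdx7 L B u z ^ 2 - pdy7 L B u z ^ 2) (closRect7 L B) volume :=
    hcphi.integrableOn_compact hcompact
  have hI1 : IntegrableOn (fun z =>
      (1 + z.1) * u z * (pdx7 L B u z + pdxxx7 L B u z + pdxyy7 L B u z)) (omega7 L B) volume :=
    ((((hcx1.mul hcu).mul ((hcx.add hc3x).add hc3y)).integrableOn_compact hcompact).mono_set hsub)
  have hI2 : IntegrableOn (fun z => u z ^ 2) (omega7 L B) volume :=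
    (((hcu.pow 2).integrableOn_compact hcompact).mono_set hsub)
  have hI3 : IntegrableOn (fun z => pdx7 L B u z ^ 2) (omega7 L B) volume :=
    (((hcx.pow 2).integrableOn_compact hcompact).mono_set hsub)
  have hI4 : IntegrableOn (fun z => pdy7 L B u z ^ 2) (omega7 L B) volume :=
    (((hcy.pow 2).integrableOn_compact hcompact).mono_set hsub)
  -- pointwise derivative facts
  have hdF : ∀ z ∈ omega7 L B,
      HasFDerivAt (FF7 L B u) (fderiv ℝ (FF7 L B u) z) z ∧
      HasFDerivAt (GG7 L B u) (fderiv ℝ (GG7 L B u) z) z ∧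
      fderiv ℝ (FF7 L B u) z (1, 0) + fderiv ℝ (GG7 L B u) z (0, 1)
        = 2 * ((1 + z.1) * u z * (pdx7 L B u z + pdxxx7 L B u z + pdxyy7 L B u z))
          + u z ^ 2 - 3 * pdx7 L B u z ^ 2 - pdy7 L B u z ^ 2 := by
    intro z hz
    obtain ⟨CF, CG, hF, hG, hval⟩ := interior_div7 hu hz
    refine ⟨hF.differentiableAt.hasFDerivAt, hG.differentiableAt.hasFDerivAt, ?_⟩
    rw [hF.fderiv, hG.fderiv]
    exact hval
  have hae_mem : ∀ᵐ z ∂(volume.restrict (closRect7 L B)), z ∈ omega7 L B := by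
    rw [Measure.restrict_congr_set haes]
    exact ae_restrict_mem hmeasΩ
  have hIint : IntegrableOn (fun z =>
      fderiv ℝ (FF7 L B u) z (1, 0) + fderiv ℝ (GG7 L B u) z (0, 1)) (closRect7 L B) volume :=
    hIphi.congr (hae_mem.mono fun z hz => ((hdF z hz).2.2).symm)
  -- divergence theorem
  have key := MeasureTheory.integral_divergence_prod_Icc_of_hasFDerivAt_off_countable_of_le
    (FF7 L B u) (GG7 L B u) (fun z => fderiv ℝ (FF7 L B u) z) (fun z => fderiv ℝ (GG7 L B u) z)
    ((0:ℝ), -B) ((L:ℝ), B) ⟨hL.le, hBB.le⟩ ∅ Set.countable_empty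
    (by rw [← Set.Icc_prod_Icc]; exact hcF)
    (by rw [← Set.Icc_prod_Icc]; exact hcG)
    (fun z hz => (hdF z (by simpa [omega7] using hz)).1)
    (fun z hz => (hdF z (by simpa [omega7] using hz)).2.1)
    (by rw [← Set.Icc_prod_Icc]; exact hIint)
  -- rewrite the volume integral in key
  have hL1 : (∫ z in Set.Icc ((0:ℝ),-B) ((L:ℝ),B),
      (fderiv ℝ (FF7 L B u) z (1, 0) + fderiv ℝ (GG7 L B u) z (0, 1)))
      = ∫ z in omega7 L B,
        (2 * ((1 + z.1) * u z * (pdx7 L B u z + pdxxx7 L B u z + pdxyy7 L B u z))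
          + u z ^ 2 - 3 * pdx7 L B u z ^ 2 - pdy7 L B u z ^ 2) := by
    rw [← Set.Icc_prod_Icc]
    rw [show (Set.Icc (0:ℝ) L ×ˢ Set.Icc (-B) B : Set (ℝ × ℝ)) = closRect7 L B from rfl]
    rw [setIntegral_congr_set haes]
    exact setIntegral_congr_fun hmeasΩ fun z hz => (hdF z hz).2.2
  -- boundary integrals
  have hb1 : (∫ x in (0:ℝ)..L, GG7 L B u (x, B)) = 0 := by
    rw [intervalIntegral.integral_congr (g := fun _ => (0:ℝ))
      (fun x hx => hGtop x (by rwa [Set.uIcc_of_le hL.le] at hx))]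
    simp
  have hb2 : (∫ x in (0:ℝ)..L, GG7 L B u (x, -B)) = 0 := by
    rw [intervalIntegral.integral_congr (g := fun _ => (0:ℝ))
      (fun x hx => hGbot x (by rwa [Set.uIcc_of_le hL.le] at hx))]
    simp
  have hb3 : (∫ y in (-B)..B, FF7 L B u (L, y)) = 0 := by
    rw [intervalIntegral.integral_congr (g := fun _ => (0:ℝ))
      (fun y hy => hFL y (by rwa [Set.uIcc_of_le hBB.le] at hy))]
    simp
  have hb4 : (∫ y in (-B)..B, FF7 L B u ((0:ℝ), y))
      = -(∫ y in (-B)..B, (pdx7 L B u (0, y))^2) := by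
    rw [intervalIntegral.integral_congr (g := fun y => -(pdx7 L B u (0, y))^2)
      (fun y hy => hF0 y (by rwa [Set.uIcc_of_le hBB.le] at hy))]
    exact intervalIntegral.integral_neg
  -- combine
  have hkey2 : (∫ z in omega7 L B,
      (2 * ((1 + z.1) * u z * (pdx7 L B u z + pdxxx7 L B u z + pdxyy7 L B u z))
        + u z ^ 2 - 3 * pdx7 L B u z ^ 2 - pdy7 L B u z ^ 2))
      = ∫ y in (-B)..B, (pdx7 L B u (0, y))^2 := by
    rw [← hL1, key, hb1, hb2, hb3, hb4]
    ring
  have hsplit : (∫ z in omega7 L B,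
      (2 * ((1 + z.1) * u z * (pdx7 L B u z + pdxxx7 L B u z + pdxyy7 L B u z))
        + u z ^ 2 - 3 * pdx7 L B u z ^ 2 - pdy7 L B u z ^ 2))
      = 2 * (∫ z in omega7 L B,
          (1 + z.1) * u z * (pdx7 L B u z + pdxxx7 L B u z + pdxyy7 L B u z))
        + (∫ z in omega7 L B, u z ^ 2)
        - 3 * (∫ z in omega7 L B, pdx7 L B u z ^ 2)
        - (∫ z in omega7 L B, pdy7 L B u z ^ 2) := by
    have hIb : IntegrableOn (fun z =>
        2 * ((1 + z.1) * u z * (pdx7 L B u z + pdxxx7 L B u z + pdxyy7 L B u z))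
          + u z ^ 2) (omega7 L B) volume := (hI1.const_mul 2).add hI2
    have hIa : IntegrableOn (fun z =>
        2 * ((1 + z.1) * u z * (pdx7 L B u z + pdxxx7 L B u z + pdxyy7 L B u z))
          + u z ^ 2 - 3 * pdx7 L B u z ^ 2) (omega7 L B) volume :=
      hIb.sub (hI3.const_mul 3)
    have hIc : IntegrableOn (fun z => 3 * pdx7 L B u z ^ 2) (omega7 L B) volume :=
      hI3.const_mul 3
    rw [integral_sub hIa hI4, integral_sub hIb hIc,
      integral_add (hI1.const_mul 2) hI2,
      integral_const_mul, integral_const_mul]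
  have hpair : (∫ z in omega7 L B, ((pdx7 L B u z) ^ 2 + (pdy7 L B u z) ^ 2))
      = (∫ z in omega7 L B, pdx7 L B u z ^ 2) + (∫ z in omega7 L B, pdy7 L B u z ^ 2) :=
    integral_add hI3 hI4
  rw [hpair]
  have := hsplit.symm.trans hkey2
  linarith
end

section
/- Let L, B > 0 and let u : ℝ² → ℝ be three times continuously differentiable on the closure of Ω = (0,L)×(−B,B), satisfying u(x,−B)=u(x,B)=0 for x∈[0,L], u(0,y)=u(L,y)=0 for y∈[−B,B], and ∂_x u(L,y)=0 for y∈[−B,B]. Then 2∫_Ω u (∂_x u + u²∂_x u + ∂_x³ u + ∂_x∂_y² u) dx dy = ∫_{−B}^{B} (∂_x u(0,y))² dy. In particular this quantity is nonnegative. -/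
open MeasureTheory

/-- The open rectangle `Ω = (0,L) × (-B,B)`. -/
def omega9 (L B : ℝ) : Set (ℝ × ℝ) := Set.Ioo 0 L ×ˢ Set.Ioo (-B) B

/-- The closed rectangle `[0,L] × [-B,B]`, the closure of `Ω`. -/
def closRect9 (L B : ℝ) : Set (ℝ × ℝ) := Set.Icc 0 L ×ˢ Set.Icc (-B) B

/-- Partial derivative of `u` in `x`, computed within the closed rectangle. -/
noncomputable def pdx9 (L B : ℝ) (u : ℝ × ℝ → ℝ) (z : ℝ × ℝ) : ℝ :=
  fderivWithin ℝ u (closRect9 L B) z (1, 0)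

/-- Third partial derivative `u_{xxx}`, computed within the closed rectangle. -/
noncomputable def pdxxx9 (L B : ℝ) (u : ℝ × ℝ → ℝ) (z : ℝ × ℝ) : ℝ :=
  iteratedFDerivWithin ℝ 3 u (closRect9 L B) z ![(1, 0), (1, 0), (1, 0)]

/-- Mixed third partial derivative `u_{xyy}`, computed within the closed rectangle. -/
noncomputable def pdxyy9 (L B : ℝ) (u : ℝ × ℝ → ℝ) (z : ℝ × ℝ) : ℝ :=
  iteratedFDerivWithin ℝ 3 u (closRect9 L B) z ![(1, 0), (0, 1), (0, 1)]

open MeasureTheory Set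

/-- directional derivative within the closed rectangle -/
noncomputable def pdv9 (L B : ℝ) (v : ℝ × ℝ) (g : ℝ × ℝ → ℝ) (z : ℝ × ℝ) : ℝ :=
  fderivWithin ℝ g (closRect9 L B) z v

lemma closRect9_uniqueDiffOn {L B : ℝ} (hL : 0 < L) (hB : 0 < B) :
    UniqueDiffOn ℝ (closRect9 L B) :=
  (uniqueDiffOn_Icc hL).prod (uniqueDiffOn_Icc (by linarith))

lemma omega9_subset {L B : ℝ} : omega9 L B ⊆ closRect9 L B :=
  Set.prod_mono Set.Ioo_subset_Icc_self Set.Ioo_subset_Icc_self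

lemma isOpen_omega9 (L B : ℝ) : IsOpen (omega9 L B) := isOpen_Ioo.prod isOpen_Ioo

lemma isCompact_closRect9 (L B : ℝ) : IsCompact (closRect9 L B) :=
  isCompact_Icc.prod isCompact_Icc

lemma closRect9_mem_nhds {L B : ℝ} {z : ℝ × ℝ} (hz : z ∈ omega9 L B) :
    closRect9 L B ∈ nhds z :=
  Filter.mem_of_superset ((isOpen_omega9 L B).mem_nhds hz) omega9_subset

lemma pdv9_contDiffOn {L B : ℝ} (hL : 0 < L) (hB : 0 < B) {n : WithTop ℕ∞} {g : ℝ × ℝ → ℝ}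
    (hg : ContDiffOn ℝ (n + 1) g (closRect9 L B)) (v : ℝ × ℝ) :
    ContDiffOn ℝ n (pdv9 L B v g) (closRect9 L B) :=
  (hg.fderivWithin (closRect9_uniqueDiffOn hL hB) le_rfl).clm_apply contDiffOn_const

lemma pdv9_continuousOn {L B : ℝ} (hL : 0 < L) (hB : 0 < B) {g : ℝ × ℝ → ℝ}
    (hg : ContDiffOn ℝ 1 g (closRect9 L B)) (v : ℝ × ℝ) :
    ContinuousOn (pdv9 L B v g) (closRect9 L B) := by
  have : ContDiffOn ℝ (0 + 1) g (closRect9 L B) := by norm_num; exact hg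
  exact (pdv9_contDiffOn hL hB this v).continuousOn

lemma clm_swap9 {F : Type*} [NormedAddCommGroup F] [NormedSpace ℝ F] {s : Set (ℝ × ℝ)}
    {z : ℝ × ℝ} {c : ℝ × ℝ → (ℝ × ℝ) →L[ℝ] F} (hxs : UniqueDiffWithinAt ℝ s z)
    (hc : DifferentiableWithinAt ℝ c s z) (v w : ℝ × ℝ) :
    fderivWithin ℝ (fun y => c y v) s z w = (fderivWithin ℝ c s z w) v := by
  rw [fderivWithin_clm_apply hxs hc (differentiableWithinAt_const v)]
  rw [fderivWithin_const_apply]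
  simp

lemma iterated3_eq9 {L B : ℝ} (hL : 0 < L) (hB : 0 < B) {u : ℝ × ℝ → ℝ}
    (hu : ContDiffOn ℝ 3 u (closRect9 L B)) {z : ℝ × ℝ} (hz : z ∈ closRect9 L B)
    (a b c : ℝ × ℝ) :
    iteratedFDerivWithin ℝ 3 u (closRect9 L B) z ![a, b, c]
      = pdv9 L B a (pdv9 L B b (pdv9 L B c u)) z := by
  set S := closRect9 L B with hSdef
  have hS : UniqueDiffOn ℝ S := closRect9_uniqueDiffOn hL hB
  have hd1 : ContDiffOn ℝ 2 (fderivWithin ℝ u S) S := hu.fderivWithin hS (by norm_num)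
  have hgc : ContDiffOn ℝ 2 (pdv9 L B c u) S := by
    have : ContDiffOn ℝ (2 + 1) u S := by norm_num; exact hu
    exact pdv9_contDiffOn hL hB this c
  have hgc1 : ContDiffOn ℝ 1 (fderivWithin ℝ (pdv9 L B c u) S) S :=
    hgc.fderivWithin hS (by norm_num)
  have hinit : Fin.init ![a, b, c] = ![a, b] := by
    funext i; fin_cases i <;> rfl
  have hinit2 : Fin.init ![a, b] = ![a] := by
    funext i; fin_cases i <;> rfl
  have h1 : iteratedFDerivWithin ℝ 3 u S z ![a, b, c]
      = iteratedFDerivWithin ℝ 2 (fderivWithin ℝ u S) S z ![a, b] c := by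
    have := iteratedFDerivWithin_succ_apply_right (n := 2) hS hz (f := u) ![a, b, c]
    rw [hinit] at this
    exact this
  have h2 : iteratedFDerivWithin ℝ 2 (pdv9 L B c u) S z ![a, b]
      = iteratedFDerivWithin ℝ 2 (fderivWithin ℝ u S) S z ![a, b] c :=
    iteratedFDerivWithin_clm_apply_const_apply hS hd1 le_rfl hz
  have h3 : iteratedFDerivWithin ℝ 2 (pdv9 L B c u) S z ![a, b]
      = iteratedFDerivWithin ℝ 1 (fderivWithin ℝ (pdv9 L B c u) S) S z ![a] b := by
    have := iteratedFDerivWithin_succ_apply_right (n := 1) hS hz (f := pdv9 L B c u) ![a, b]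
    rw [hinit2] at this
    exact this
  have h4 : iteratedFDerivWithin ℝ 1 (pdv9 L B b (pdv9 L B c u)) S z ![a]
      = iteratedFDerivWithin ℝ 1 (fderivWithin ℝ (pdv9 L B c u) S) S z ![a] b :=
    iteratedFDerivWithin_clm_apply_const_apply hS hgc1 le_rfl hz
  have h5 : iteratedFDerivWithin ℝ 1 (pdv9 L B b (pdv9 L B c u)) S z ![a]
      = fderivWithin ℝ (pdv9 L B b (pdv9 L B c u)) S z a :=
    iteratedFDerivWithin_one_apply (hS z hz) _
  rw [h1, ← h2, h3, ← h4, h5]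
  rfl

/-- If `g` vanishes on a vertical segment `{a} × [-B,B]` of the rectangle, then its
`y`-directional derivative (within the rectangle) vanishes on that segment. -/
lemma vert_zero9 {L B : ℝ} (hL : 0 < L) (hB : 0 < B) {g : ℝ × ℝ → ℝ}
    (hg : DifferentiableOn ℝ g (closRect9 L B)) {a : ℝ} (ha : a ∈ Icc (0 : ℝ) L)
    (h0 : ∀ t ∈ Icc (-B) B, g (a, t) = 0) {y : ℝ} (hy : y ∈ Icc (-B) B) :
    pdv9 L B ((0 : ℝ), (1 : ℝ)) g (a, y) = 0 := by
  have hBB : -B < B := by linarith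
  have hmem : ((a : ℝ), y) ∈ closRect9 L B := ⟨ha, hy⟩
  have hD : HasFDerivWithinAt g (fderivWithin ℝ g (closRect9 L B) (a, y))
      (closRect9 L B) (a, y) := (hg (a, y) hmem).hasFDerivWithinAt
  have hc : HasDerivWithinAt (fun t => ((a : ℝ), t)) (((0 : ℝ), (1 : ℝ)))
      (Icc (-B) B) y :=
    ((hasDerivAt_const y a).prodMk (hasDerivAt_id y)).hasDerivWithinAt
  have hmaps : MapsTo (fun t => ((a : ℝ), t)) (Icc (-B) B) (closRect9 L B) :=
    fun t ht => ⟨ha, ht⟩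
  have h1 : HasDerivWithinAt (fun t => g (a, t))
      (fderivWithin ℝ g (closRect9 L B) (a, y) ((0 : ℝ), (1 : ℝ))) (Icc (-B) B) y :=
    hD.comp_hasDerivWithinAt y hc hmaps
  have h2 : HasDerivWithinAt (fun t => g (a, t)) 0 (Icc (-B) B) y :=
    (hasDerivWithinAt_const y _ (0 : ℝ)).congr h0 (h0 y hy)
  exact ((uniqueDiffOn_Icc hBB) y hy).eq_deriv _ h1 h2

/-- interior points: `HasFDerivAt` with the within-derivative -/
lemma hasFDerivAt_of_mem9 {L B : ℝ} {g : ℝ × ℝ → ℝ} (hg : DifferentiableOn ℝ g (closRect9 L B))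
    {z : ℝ × ℝ} (hz : z ∈ omega9 L B) :
    HasFDerivAt g (fderivWithin ℝ g (closRect9 L B) z) z :=
  ((hg z (omega9_subset hz)).hasFDerivWithinAt).hasFDerivAt (closRect9_mem_nhds hz)

/-- Schwarz symmetry of second derivatives at interior points. -/
lemma schwarz9 {L B : ℝ} (hL : 0 < L) (hB : 0 < B) {g : ℝ × ℝ → ℝ}
    (hg : ContDiffOn ℝ 2 g (closRect9 L B)) {z : ℝ × ℝ} (hz : z ∈ omega9 L B)
    (v w : ℝ × ℝ) :
    pdv9 L B v (pdv9 L B w g) z = pdv9 L B w (pdv9 L B v g) z := by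
  set S := closRect9 L B with hSdef
  have hS : UniqueDiffOn ℝ S := closRect9_uniqueDiffOn hL hB
  have hzS : z ∈ S := omega9_subset hz
  have hd1 : ContDiffOn ℝ 1 (fderivWithin ℝ g S) S := hg.fderivWithin hS (by norm_num)
  have hdiffg : DifferentiableOn ℝ g S := hg.differentiableOn (by norm_num)
  have hf : ∀ᶠ w in nhds z, HasFDerivAt g (fderivWithin ℝ g S w) w := by
    filter_upwards [(isOpen_omega9 L B).mem_nhds hz] with w hw
    exact hasFDerivAt_of_mem9 hdiffg hw
  have hd1' : DifferentiableWithinAt ℝ (fderivWithin ℝ g S) S z :=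
    (hd1.differentiableOn (by norm_num)) z hzS
  have hx : HasFDerivAt (fderivWithin ℝ g S)
      (fderivWithin ℝ (fderivWithin ℝ g S) S z) z :=
    hd1'.hasFDerivWithinAt.hasFDerivAt (closRect9_mem_nhds hz)
  have sym := second_derivative_symmetric_of_eventually hf hx v w
  have e1 : pdv9 L B v (pdv9 L B w g) z
      = fderivWithin ℝ (fderivWithin ℝ g S) S z v w :=
    clm_swap9 (hS z hzS) hd1' w v
  have e2 : pdv9 L B w (pdv9 L B v g) z
      = fderivWithin ℝ (fderivWithin ℝ g S) S z w v :=
    clm_swap9 (hS z hzS) hd1' v w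
  rw [e1, e2, sym]

lemma ftc_x9 (L B : ℝ) (hL : 0 < L) (hB : 0 < B) (F f : ℝ × ℝ → ℝ)
    (hF : ContinuousOn F (closRect9 L B)) (hf : ContinuousOn f (closRect9 L B))
    (hd : ∀ x ∈ Set.Ioo (0 : ℝ) L, ∀ y ∈ Set.Ioo (-B) B,
      HasDerivAt (fun t => F (t, y)) (f (x, y)) x) :
    ∫ z in omega9 L B, f z = ∫ y in Set.Ioo (-B) B, (F (L, y) - F (0, y)) := by
  have hBB : -B < B := by linarith
  have hint : IntegrableOn f (omega9 L B) :=
    (hf.integrableOn_compact (isCompact_closRect9 L B)).mono_set omega9_subset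
  have hint' : Integrable f
      ((volume.restrict (Set.Ioo (0:ℝ) L)).prod (volume.restrict (Set.Ioo (-B) B))) := by
    rw [Measure.prod_restrict]
    have : (volume : Measure (ℝ × ℝ)) = (volume : Measure ℝ).prod volume :=
      Measure.volume_eq_prod ℝ ℝ
    rw [← this]
    exact hint
  have h1 : ∫ z in omega9 L B, f z
      = ∫ y in Set.Ioo (-B) B, ∫ x in Set.Ioo (0:ℝ) L, f (x, y) := by
    rw [omega9, show (volume : Measure (ℝ × ℝ)) = (volume : Measure ℝ).prod volume from
      Measure.volume_eq_prod ℝ ℝ, ← Measure.prod_restrict]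
    exact integral_prod_symm f hint'
  rw [h1]
  refine setIntegral_congr_fun measurableSet_Ioo (fun y hy => ?_)
  have hyIcc : y ∈ Icc (-B) B := Ioo_subset_Icc_self hy
  have hmaps : MapsTo (fun t => ((t : ℝ), y)) (Icc (0:ℝ) L) (closRect9 L B) :=
    fun t ht => ⟨ht, hyIcc⟩
  have hcont : ContinuousOn (fun t => F (t, y)) (Icc (0:ℝ) L) :=
    hF.comp ((continuous_id.prodMk continuous_const).continuousOn) hmaps
  have hcontf : ContinuousOn (fun t => f (t, y)) (Icc (0:ℝ) L) :=
    hf.comp ((continuous_id.prodMk continuous_const).continuousOn) hmaps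
  have key : ∫ x in (0:ℝ)..L, f (x, y) = F (L, y) - F (0, y) := by
    refine intervalIntegral.integral_eq_sub_of_hasDeriv_right_of_le hL.le hcont
      (fun x hx => ((hd x hx y hy).hasDerivWithinAt)) ?_
    exact hcontf.intervalIntegrable_of_Icc hL.le
  calc ∫ x in Set.Ioo (0:ℝ) L, f (x, y)
      = ∫ x in Set.Ioc (0:ℝ) L, f (x, y) := (integral_Ioc_eq_integral_Ioo).symm
    _ = ∫ x in (0:ℝ)..L, f (x, y) := (intervalIntegral.integral_of_le hL.le).symm
    _ = F (L, y) - F (0, y) := key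

lemma ftc_y9 (L B : ℝ) (hL : 0 < L) (hB : 0 < B) (F f : ℝ × ℝ → ℝ)
    (hF : ContinuousOn F (closRect9 L B)) (hf : ContinuousOn f (closRect9 L B))
    (hd : ∀ x ∈ Set.Ioo (0 : ℝ) L, ∀ y ∈ Set.Ioo (-B) B,
      HasDerivAt (fun t => F (x, t)) (f (x, y)) y) :
    ∫ z in omega9 L B, f z = ∫ x in Set.Ioo (0:ℝ) L, (F (x, B) - F (x, -B)) := by
  have hBB : -B < B := by linarith
  have hint : IntegrableOn f (omega9 L B) :=
    (hf.integrableOn_compact (isCompact_closRect9 L B)).mono_set omega9_subset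
  have hint' : Integrable f
      ((volume.restrict (Set.Ioo (0:ℝ) L)).prod (volume.restrict (Set.Ioo (-B) B))) := by
    rw [Measure.prod_restrict]
    rw [← show (volume : Measure (ℝ × ℝ)) = (volume : Measure ℝ).prod volume from
      Measure.volume_eq_prod ℝ ℝ]
    exact hint
  have h1 : ∫ z in omega9 L B, f z
      = ∫ x in Set.Ioo (0:ℝ) L, ∫ y in Set.Ioo (-B) B, f (x, y) := by
    rw [omega9, show (volume : Measure (ℝ × ℝ)) = (volume : Measure ℝ).prod volume from
      Measure.volume_eq_prod ℝ ℝ, ← Measure.prod_restrict]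
    exact integral_prod f hint'
  rw [h1]
  refine setIntegral_congr_fun measurableSet_Ioo (fun x hx => ?_)
  have hxIcc : x ∈ Icc (0:ℝ) L := Ioo_subset_Icc_self hx
  have hmaps : MapsTo (fun t => (x, (t : ℝ))) (Icc (-B) B) (closRect9 L B) :=
    fun t ht => ⟨hxIcc, ht⟩
  have hcont : ContinuousOn (fun t => F (x, t)) (Icc (-B) B) :=
    hF.comp ((continuous_const.prodMk continuous_id).continuousOn) hmaps
  have hcontf : ContinuousOn (fun t => f (x, t)) (Icc (-B) B) :=
    hf.comp ((continuous_const.prodMk continuous_id).continuousOn) hmaps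
  have key : ∫ t in (-B)..B, f (x, t) = F (x, B) - F (x, -B) := by
    refine intervalIntegral.integral_eq_sub_of_hasDeriv_right_of_le hBB.le hcont
      (fun t ht => ((hd x hx t ht).hasDerivWithinAt)) ?_
    exact hcontf.intervalIntegrable_of_Icc hBB.le
  calc ∫ t in Set.Ioo (-B) B, f (x, t)
      = ∫ t in Set.Ioc (-B) B, f (x, t) := (integral_Ioc_eq_integral_Ioo).symm
    _ = ∫ t in (-B)..B, f (x, t) := (intervalIntegral.integral_of_le hBB.le).symm
    _ = F (x, B) - F (x, -B) := key

noncomputable def UY9 (L B : ℝ) (u : ℝ × ℝ → ℝ) : ℝ × ℝ → ℝ := pdv9 L B (0, 1) u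
noncomputable def UXX9 (L B : ℝ) (u : ℝ × ℝ → ℝ) : ℝ × ℝ → ℝ := pdv9 L B (1, 0) (pdx9 L B u)
noncomputable def UYX9 (L B : ℝ) (u : ℝ × ℝ → ℝ) : ℝ × ℝ → ℝ := pdv9 L B (1, 0) (UY9 L B u)
noncomputable def UYY9 (L B : ℝ) (u : ℝ × ℝ → ℝ) : ℝ × ℝ → ℝ := pdv9 L B (0, 1) (UY9 L B u)
noncomputable def UXXX9 (L B : ℝ) (u : ℝ × ℝ → ℝ) : ℝ × ℝ → ℝ := pdv9 L B (1, 0) (UXX9 L B u)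
noncomputable def UYYX9 (L B : ℝ) (u : ℝ × ℝ → ℝ) : ℝ × ℝ → ℝ := pdv9 L B (1, 0) (UYY9 L B u)

noncomputable def P9 (L B : ℝ) (u : ℝ × ℝ → ℝ) (z : ℝ × ℝ) : ℝ :=
  u z ^ 2 / 2 + u z ^ 4 / 4 + u z * UXX9 L B u z
    - (pdx9 L B u z) ^ 2 / 2 - (UY9 L B u z) ^ 2 / 2
noncomputable def Q9 (L B : ℝ) (u : ℝ × ℝ → ℝ) (z : ℝ × ℝ) : ℝ := u z * UYX9 L B u z
noncomputable def p9 (L B : ℝ) (u : ℝ × ℝ → ℝ) (z : ℝ × ℝ) : ℝ :=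
  u z * pdx9 L B u z + u z ^ 3 * pdx9 L B u z + u z * UXXX9 L B u z
    - UY9 L B u z * UYX9 L B u z
noncomputable def q9 (L B : ℝ) (u : ℝ × ℝ → ℝ) (z : ℝ × ℝ) : ℝ :=
  UY9 L B u z * UYX9 L B u z + u z * UYYX9 L B u z

section Reg
variable {L B : ℝ} {u : ℝ × ℝ → ℝ}

lemma ux_cd2 (hL : 0 < L) (hB : 0 < B) (hu : ContDiffOn ℝ 3 u (closRect9 L B)) :
    ContDiffOn ℝ 2 (pdx9 L B u) (closRect9 L B) :=
  pdv9_contDiffOn hL hB (n := 2) (by norm_num; exact hu) (1, 0)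

lemma uy_cd2 (hL : 0 < L) (hB : 0 < B) (hu : ContDiffOn ℝ 3 u (closRect9 L B)) :
    ContDiffOn ℝ 2 (UY9 L B u) (closRect9 L B) :=
  pdv9_contDiffOn hL hB (n := 2) (by norm_num; exact hu) (0, 1)

lemma uxx_cd1 (hL : 0 < L) (hB : 0 < B) (hu : ContDiffOn ℝ 3 u (closRect9 L B)) :
    ContDiffOn ℝ 1 (UXX9 L B u) (closRect9 L B) :=
  pdv9_contDiffOn hL hB (n := 1) (by norm_num; exact ux_cd2 hL hB hu) (1, 0)

lemma uyx_cd1 (hL : 0 < L) (hB : 0 < B) (hu : ContDiffOn ℝ 3 u (closRect9 L B)) :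
    ContDiffOn ℝ 1 (UYX9 L B u) (closRect9 L B) :=
  pdv9_contDiffOn hL hB (n := 1) (by norm_num; exact uy_cd2 hL hB hu) (1, 0)

lemma uyy_cd1 (hL : 0 < L) (hB : 0 < B) (hu : ContDiffOn ℝ 3 u (closRect9 L B)) :
    ContDiffOn ℝ 1 (UYY9 L B u) (closRect9 L B) :=
  pdv9_contDiffOn hL hB (n := 1) (by norm_num; exact uy_cd2 hL hB hu) (0, 1)

lemma uxxx_cont (hL : 0 < L) (hB : 0 < B) (hu : ContDiffOn ℝ 3 u (closRect9 L B)) :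
    ContinuousOn (UXXX9 L B u) (closRect9 L B) :=
  pdv9_continuousOn hL hB (uxx_cd1 hL hB hu) (1, 0)

lemma uyyx_cont (hL : 0 < L) (hB : 0 < B) (hu : ContDiffOn ℝ 3 u (closRect9 L B)) :
    ContinuousOn (UYYX9 L B u) (closRect9 L B) :=
  pdv9_continuousOn hL hB (uyy_cd1 hL hB hu) (1, 0)

end Reg

/-- slice derivative in the x-direction at an interior point -/
lemma slice_x9 {L B : ℝ} {g : ℝ × ℝ → ℝ} (hg : DifferentiableOn ℝ g (closRect9 L B))
    {z : ℝ × ℝ} (hz : z ∈ omega9 L B) :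
    HasDerivAt (fun t => g (t, z.2)) (pdv9 L B (1, 0) g z) z.1 := by
  have h := hasFDerivAt_of_mem9 hg hz
  have hcurve : HasDerivAt (fun t => (t, z.2)) ((1 : ℝ), (0 : ℝ)) z.1 :=
    (hasDerivAt_id z.1).prodMk (hasDerivAt_const z.1 z.2)
  exact h.comp_hasDerivAt z.1 hcurve

/-- slice derivative in the y-direction at an interior point -/
lemma slice_y9 {L B : ℝ} {g : ℝ × ℝ → ℝ} (hg : DifferentiableOn ℝ g (closRect9 L B))
    {z : ℝ × ℝ} (hz : z ∈ omega9 L B) :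
    HasDerivAt (fun t => g (z.1, t)) (pdv9 L B (0, 1) g z) z.2 := by
  have h := hasFDerivAt_of_mem9 hg hz
  have hcurve : HasDerivAt (fun t => (z.1, t)) ((0 : ℝ), (1 : ℝ)) z.2 :=
    (hasDerivAt_const z.2 z.1).prodMk (hasDerivAt_id z.2)
  exact h.comp_hasDerivAt z.2 hcurve

lemma hasDerivAt_P9 {L B : ℝ} {u : ℝ × ℝ → ℝ} (hL : 0 < L) (hB : 0 < B)
    (hu : ContDiffOn ℝ 3 u (closRect9 L B)) {x y : ℝ}
    (hx : x ∈ Ioo (0 : ℝ) L) (hy : y ∈ Ioo (-B) B) :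
    HasDerivAt (fun t => P9 L B u (t, y)) (p9 L B u (x, y)) x := by
  have hz : ((x : ℝ), y) ∈ omega9 L B := ⟨hx, hy⟩
  have hdu : DifferentiableOn ℝ u (closRect9 L B) := hu.differentiableOn (by norm_num)
  have hdux : DifferentiableOn ℝ (pdx9 L B u) (closRect9 L B) :=
    (ux_cd2 hL hB hu).differentiableOn (by norm_num)
  have hduy : DifferentiableOn ℝ (UY9 L B u) (closRect9 L B) :=
    (uy_cd2 hL hB hu).differentiableOn (by norm_num)
  have hduxx : DifferentiableOn ℝ (UXX9 L B u) (closRect9 L B) :=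
    (uxx_cd1 hL hB hu).differentiableOn (by norm_num)
  have hU := slice_x9 hdu hz
  have hUX := slice_x9 hdux hz
  have hUY := slice_x9 hduy hz
  have hUXX := slice_x9 hduxx hz
  have H := (((((hU.pow 2).div_const 2).add ((hU.pow 4).div_const 4)).add
      (hU.mul hUXX)).sub ((hUX.pow 2).div_const 2)).sub ((hUY.pow 2).div_const 2)
  unfold P9
  refine H.congr_deriv ?_
  simp only [p9, pdx9, UY9, UXX9, UXXX9, UYX9, pdv9, Prod.fst, Prod.snd]
  push_cast
  ring

lemma hasDerivAt_Q9 {L B : ℝ} {u : ℝ × ℝ → ℝ} (hL : 0 < L) (hB : 0 < B)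
    (hu : ContDiffOn ℝ 3 u (closRect9 L B)) {x y : ℝ}
    (hx : x ∈ Ioo (0 : ℝ) L) (hy : y ∈ Ioo (-B) B) :
    HasDerivAt (fun t => Q9 L B u (x, t)) (q9 L B u (x, y)) y := by
  have hz : ((x : ℝ), y) ∈ omega9 L B := ⟨hx, hy⟩
  have hdu : DifferentiableOn ℝ u (closRect9 L B) := hu.differentiableOn (by norm_num)
  have hduyx : DifferentiableOn ℝ (UYX9 L B u) (closRect9 L B) :=
    (uyx_cd1 hL hB hu).differentiableOn (by norm_num)
  have hU := slice_y9 hdu hz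
  have hUYX := slice_y9 hduyx hz
  have hsch : pdv9 L B (0, 1) (UYX9 L B u) (x, y) = UYYX9 L B u (x, y) := by
    have := schwarz9 hL hB (uy_cd2 hL hB hu) hz ((0 : ℝ), (1 : ℝ)) ((1 : ℝ), (0 : ℝ))
    exact this
  have H := hU.mul hUYX
  unfold Q9
  refine H.congr_deriv ?_
  rw [hsch]
  rfl

/-- **The identity behind Estimate I (5.3)**: multiplying the spatial part of the mZK
equation by `u` and integrating over `Ω = (0,L) × (-B,B)` gives, for `u` three times
continuously differentiable on the closure of `Ω` with `u(x,±B) = 0`,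
`u(0,y) = u(L,y) = 0` and `u_x(L,y) = 0`,
`2∫_Ω u (u_x + u²u_x + u_xxx + u_xyy) = ∫_{-B}^{B} u_x(0,y)² dy ≥ 0`. -/
theorem estimate_I_identity (L B : ℝ) (hL : 0 < L) (hB : 0 < B) (u : ℝ × ℝ → ℝ)
    (hu : ContDiffOn ℝ 3 u (closRect9 L B))
    (hbdy_y : ∀ x ∈ Set.Icc (0 : ℝ) L, u (x, -B) = 0 ∧ u (x, B) = 0)
    (hbdy_x : ∀ y ∈ Set.Icc (-B) B, u ((0 : ℝ), y) = 0 ∧ u (L, y) = 0)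
    (hbdy_ux : ∀ y ∈ Set.Icc (-B) B, pdx9 L B u (L, y) = 0) :
    (2 * (∫ z in omega9 L B,
          u z * (pdx9 L B u z + (u z) ^ 2 * pdx9 L B u z
            + pdxxx9 L B u z + pdxyy9 L B u z))
        = ∫ y in (-B)..B, (pdx9 L B u (0, y)) ^ 2)
      ∧ 0 ≤ 2 * (∫ z in omega9 L B,
          u z * (pdx9 L B u z + (u z) ^ 2 * pdx9 L B u z
            + pdxxx9 L B u z + pdxyy9 L B u z)) := by
  have hBB : -B < B := by linarith
  have h0Icc : (0 : ℝ) ∈ Icc (0 : ℝ) L := left_mem_Icc.mpr hL.le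
  have hLIcc : L ∈ Icc (0 : ℝ) L := right_mem_Icc.mpr hL.le
  -- continuity facts
  have cu := hu.continuousOn
  have cux := (ux_cd2 hL hB hu).continuousOn
  have cuy := (uy_cd2 hL hB hu).continuousOn
  have cuxx := (uxx_cd1 hL hB hu).continuousOn
  have cuyx := (uyx_cd1 hL hB hu).continuousOn
  have cuxxx := uxxx_cont hL hB hu
  have cuyyx := uyyx_cont hL hB hu
  have cP : ContinuousOn (P9 L B u) (closRect9 L B) := by
    unfold P9
    exact (((((cu.pow 2).div_const 2).add ((cu.pow 4).div_const 4)).add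
      (cu.mul cuxx)).sub ((cux.pow 2).div_const 2)).sub ((cuy.pow 2).div_const 2)
  have cQ : ContinuousOn (Q9 L B u) (closRect9 L B) := cu.mul cuyx
  have cp : ContinuousOn (p9 L B u) (closRect9 L B) := by
    unfold p9
    exact (((cu.mul cux).add ((cu.pow 3).mul cux)).add (cu.mul cuxxx)).sub (cuy.mul cuyx)
  have cq : ContinuousOn (q9 L B u) (closRect9 L B) := (cuy.mul cuyx).add (cu.mul cuyyx)
  -- FTC in each direction
  have hIp : ∫ z in omega9 L B, p9 L B u z
      = ∫ y in Set.Ioo (-B) B, (P9 L B u (L, y) - P9 L B u (0, y)) :=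
    ftc_x9 L B hL hB _ _ cP cp (fun x hx y hy => hasDerivAt_P9 hL hB hu hx hy)
  have hIq : ∫ z in omega9 L B, q9 L B u z
      = ∫ x in Set.Ioo (0 : ℝ) L, (Q9 L B u (x, B) - Q9 L B u (x, -B)) :=
    ftc_y9 L B hL hB _ _ cQ cq (fun x hx y hy => hasDerivAt_Q9 hL hB hu hx hy)
  -- boundary values
  have hdu : DifferentiableOn ℝ u (closRect9 L B) := hu.differentiableOn (by norm_num)
  have hPbd : EqOn (fun y => P9 L B u (L, y) - P9 L B u (0, y))
      (fun y => (pdx9 L B u (0, y)) ^ 2 / 2) (Set.Ioo (-B) B) := by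
    intro y hy
    have hyI : y ∈ Icc (-B) B := Ioo_subset_Icc_self hy
    have h0 : u ((0 : ℝ), y) = 0 := (hbdy_x y hyI).1
    have hLv : u (L, y) = 0 := (hbdy_x y hyI).2
    have hxL : pdx9 L B u (L, y) = 0 := hbdy_ux y hyI
    have hy0 : UY9 L B u ((0 : ℝ), y) = 0 :=
      vert_zero9 hL hB hdu h0Icc (fun t ht => (hbdy_x t ht).1) hyI
    have hyL : UY9 L B u (L, y) = 0 :=
      vert_zero9 hL hB hdu hLIcc (fun t ht => (hbdy_x t ht).2) hyI
    simp only [P9]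
    rw [h0, hLv, hxL, hy0, hyL]
    ring
  have hQbd : EqOn (fun x => Q9 L B u (x, B) - Q9 L B u (x, -B))
      (fun _ => (0 : ℝ)) (Set.Ioo (0 : ℝ) L) := by
    intro x hx
    have hxI : x ∈ Icc (0 : ℝ) L := Ioo_subset_Icc_self hx
    simp only [Q9]
    rw [(hbdy_y x hxI).1, (hbdy_y x hxI).2]
    ring
  -- rewriting the integrand on the open rectangle
  have hcong : EqOn
      (fun z => u z * (pdx9 L B u z + (u z) ^ 2 * pdx9 L B u z
        + pdxxx9 L B u z + pdxyy9 L B u z))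
      (fun z => p9 L B u z + q9 L B u z) (omega9 L B) := by
    intro z hz
    have hzS := omega9_subset hz
    have h3 : pdxxx9 L B u z = UXXX9 L B u z := by
      unfold pdxxx9
      rw [iterated3_eq9 hL hB hu hzS]
      rfl
    have h4 : pdxyy9 L B u z = UYYX9 L B u z := by
      unfold pdxyy9
      rw [iterated3_eq9 hL hB hu hzS]
      rfl
    simp only [h3, h4, p9, q9]
    ring
  have hip : IntegrableOn (p9 L B u) (omega9 L B) :=
    (cp.integrableOn_compact (isCompact_closRect9 L B)).mono_set omega9_subset
  have hiq : IntegrableOn (q9 L B u) (omega9 L B) :=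
    (cq.integrableOn_compact (isCompact_closRect9 L B)).mono_set omega9_subset
  have hsplit : (∫ z in omega9 L B,
        u z * (pdx9 L B u z + (u z) ^ 2 * pdx9 L B u z
          + pdxxx9 L B u z + pdxyy9 L B u z))
      = (∫ z in omega9 L B, p9 L B u z) + (∫ z in omega9 L B, q9 L B u z) := by
    rw [setIntegral_congr_fun (isOpen_omega9 L B).measurableSet hcong]
    exact integral_add hip hiq
  have hPval : ∫ y in Set.Ioo (-B) B, (P9 L B u (L, y) - P9 L B u (0, y))
      = (∫ y in Set.Ioo (-B) B, (pdx9 L B u (0, y)) ^ 2) / 2 := by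
    rw [setIntegral_congr_fun measurableSet_Ioo hPbd]
    exact integral_div 2 _
  have hQval : ∫ x in Set.Ioo (0 : ℝ) L, (Q9 L B u (x, B) - Q9 L B u (x, -B)) = 0 := by
    rw [setIntegral_congr_fun measurableSet_Ioo hQbd]
    simp
  have hRHS : ∫ y in (-B)..B, (pdx9 L B u (0, y)) ^ 2
      = ∫ y in Set.Ioo (-B) B, (pdx9 L B u (0, y)) ^ 2 := by
    rw [intervalIntegral.integral_of_le hBB.le, integral_Ioc_eq_integral_Ioo]
  have hmain : 2 * (∫ z in omega9 L B,
        u z * (pdx9 L B u z + (u z) ^ 2 * pdx9 L B u z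
          + pdxxx9 L B u z + pdxyy9 L B u z))
      = ∫ y in (-B)..B, (pdx9 L B u (0, y)) ^ 2 := by
    rw [hsplit, hIp, hIq, hPval, hQval, hRHS]
    ring
  refine ⟨hmain, ?_⟩
  rw [hmain]
  apply intervalIntegral.integral_nonneg hBB.le
  intro y _
  positivity
end

section
/- Let L, B > 0 and let u : ℝ² → ℝ be twice continuously differentiable on the closure of Ω = (0,L)×(−B,B), vanishing on the boundary of Ω (u(x,±B)=0 and u(0,y)=u(L,y)=0). Then 2∫_Ω (1+x) (∂_y² u) u² (∂_x u) dx dy = ∫_Ω u² (∂_y u)² dx dy − 2∫_Ω (1+x) u (∂_x u) (∂_y u)² dx dy. -/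
open MeasureTheory

/-- The open rectangle `Ω = (0,L) × (-B,B)`. -/
def omega10 (L B : ℝ) : Set (ℝ × ℝ) := Set.Ioo 0 L ×ˢ Set.Ioo (-B) B

/-- The closed rectangle `[0,L] × [-B,B]`, the closure of `Ω`. -/
def closRect10 (L B : ℝ) : Set (ℝ × ℝ) := Set.Icc 0 L ×ˢ Set.Icc (-B) B

/-- Partial derivative of `u` in `x`, computed within the closed rectangle. -/
noncomputable def pdx10 (L B : ℝ) (u : ℝ × ℝ → ℝ) (z : ℝ × ℝ) : ℝ :=
  fderivWithin ℝ u (closRect10 L B) z (1, 0)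

/-- Partial derivative of `u` in `y`, computed within the closed rectangle. -/
noncomputable def pdy10 (L B : ℝ) (u : ℝ × ℝ → ℝ) (z : ℝ × ℝ) : ℝ :=
  fderivWithin ℝ u (closRect10 L B) z (0, 1)

/-- Second partial derivative `u_{yy}`, computed within the closed rectangle. -/
noncomputable def pdyy10 (L B : ℝ) (u : ℝ × ℝ → ℝ) (z : ℝ × ℝ) : ℝ :=
  iteratedFDerivWithin ℝ 2 u (closRect10 L B) z ![(0, 1), (0, 1)]

namespace Est544

noncomputable def W (L B : ℝ) (u : ℝ × ℝ → ℝ) : ℝ × ℝ → ℝ × ℝ →L[ℝ] ℝ :=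
  fun z => fderivWithin ℝ u (closRect10 L B) z

noncomputable def W2 (L B : ℝ) (u : ℝ × ℝ → ℝ) : ℝ × ℝ → ℝ × ℝ →L[ℝ] ℝ × ℝ →L[ℝ] ℝ :=
  fun z => fderivWithin ℝ (W L B u) (closRect10 L B) z

variable {L B : ℝ} {u : ℝ × ℝ → ℝ}

lemma omega_open : IsOpen (omega10 L B) := isOpen_Ioo.prod isOpen_Ioo

lemma omega_subset : omega10 L B ⊆ closRect10 L B :=
  Set.prod_mono Set.Ioo_subset_Icc_self Set.Ioo_subset_Icc_self

lemma rect_mem_nhds {z : ℝ × ℝ} (hz : z ∈ omega10 L B) : closRect10 L B ∈ nhds z :=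
  Filter.mem_of_superset (omega_open.mem_nhds hz) omega_subset

lemma hasFDerivAt_u (hu : ContDiffOn ℝ 2 u (closRect10 L B)) {z : ℝ × ℝ}
    (hz : z ∈ omega10 L B) : HasFDerivAt u (W L B u z) z := by
  have h : W L B u z = fderiv ℝ u z := fderivWithin_of_mem_nhds (rect_mem_nhds hz)
  rw [h]
  exact ((hu.contDiffAt (rect_mem_nhds hz)).differentiableAt (by norm_num)).hasFDerivAt

lemma W_eventuallyEq {z : ℝ × ℝ} (hz : z ∈ omega10 L B) :
    W L B u =ᶠ[nhds z] fderiv ℝ u := by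
  filter_upwards [omega_open.mem_nhds hz] with w hw
  exact fderivWithin_of_mem_nhds (rect_mem_nhds hw)

lemma diff_fderiv (hu : ContDiffOn ℝ 2 u (closRect10 L B)) {z : ℝ × ℝ}
    (hz : z ∈ omega10 L B) : DifferentiableAt ℝ (fderiv ℝ u) z := by
  have h2 : ContDiffAt ℝ 2 u z := hu.contDiffAt (rect_mem_nhds hz)
  exact (h2.fderiv_right (m := 1) (by norm_num)).differentiableAt (by norm_num)

lemma W2_eq_fderiv (hu : ContDiffOn ℝ 2 u (closRect10 L B)) {z : ℝ × ℝ}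
    (hz : z ∈ omega10 L B) : W2 L B u z = fderiv ℝ (fderiv ℝ u) z := by
  have h1 : W2 L B u z = fderiv ℝ (W L B u) z :=
    fderivWithin_of_mem_nhds (rect_mem_nhds hz)
  rw [h1, (W_eventuallyEq hz).fderiv_eq]

lemma hasFDerivAt_W (hu : ContDiffOn ℝ 2 u (closRect10 L B)) {z : ℝ × ℝ}
    (hz : z ∈ omega10 L B) : HasFDerivAt (W L B u) (W2 L B u z) z := by
  rw [W2_eq_fderiv hu hz]
  exact ((diff_fderiv hu hz).hasFDerivAt).congr_of_eventuallyEq (W_eventuallyEq hz)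

lemma W2_symm (hu : ContDiffOn ℝ 2 u (closRect10 L B)) {z : ℝ × ℝ}
    (hz : z ∈ omega10 L B) (v w : ℝ × ℝ) : W2 L B u z v w = W2 L B u z w v := by
  rw [W2_eq_fderiv hu hz]
  have hf : ∀ᶠ y in nhds z, HasFDerivAt u (fderiv ℝ u y) y := by
    filter_upwards [omega_open.mem_nhds hz] with w hw
    exact ((hu.contDiffAt (rect_mem_nhds hw)).differentiableAt (by norm_num)).hasFDerivAt
  exact second_derivative_symmetric_of_eventually hf (diff_fderiv hu hz).hasFDerivAt v w

/-! ### The vector field and its derivatives -/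

noncomputable def F1 (L B : ℝ) (u : ℝ × ℝ → ℝ) (z : ℝ × ℝ) : ℝ :=
  -((1 + z.1) * (u z * u z) * (W L B u z (0, 1) * W L B u z (0, 1)))

noncomputable def F2 (L B : ℝ) (u : ℝ × ℝ → ℝ) (z : ℝ × ℝ) : ℝ :=
  2 * (1 + z.1) * (u z * u z) * W L B u z (1, 0) * W L B u z (0, 1)

/-- derivative of `z ↦ W z v` (valid at interior points): `e ↦ W2 z e v`. -/
noncomputable def DW (L B : ℝ) (u : ℝ × ℝ → ℝ) (v : ℝ × ℝ) (z : ℝ × ℝ) :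
    ℝ × ℝ →L[ℝ] ℝ :=
  (ContinuousLinearMap.apply ℝ ℝ v).comp (W2 L B u z)

lemma hasFDerivAt_Wapp (hu : ContDiffOn ℝ 2 u (closRect10 L B)) {z : ℝ × ℝ}
    (hz : z ∈ omega10 L B) (v : ℝ × ℝ) :
    HasFDerivAt (fun w => W L B u w v) (DW L B u v z) z :=
  (ContinuousLinearMap.apply ℝ ℝ v).hasFDerivAt.comp z (hasFDerivAt_W hu hz)

noncomputable def DF1 (L B : ℝ) (u : ℝ × ℝ → ℝ) (z : ℝ × ℝ) : ℝ × ℝ →L[ℝ] ℝ :=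
  -(((1 + z.1) * (u z * u z) * (2 * W L B u z (0, 1))) • DW L B u (0, 1) z
    + (W L B u z (0, 1) * W L B u z (0, 1)) •
        ((u z * u z) • ContinuousLinearMap.fst ℝ ℝ ℝ
          + ((1 + z.1) * (2 * u z)) • W L B u z))

noncomputable def DF2 (L B : ℝ) (u : ℝ × ℝ → ℝ) (z : ℝ × ℝ) : ℝ × ℝ →L[ℝ] ℝ :=
  (2 * (1 + z.1) * (u z * u z) * W L B u z (1, 0)) • DW L B u (0, 1) z
    + W L B u z (0, 1) •
      ((2 * (1 + z.1) * (u z * u z)) • DW L B u (1, 0) z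
        + W L B u z (1, 0) •
          ((2 * (1 + z.1) * (2 * u z)) • W L B u z
            + (u z * u z) • ((2 : ℝ) • ContinuousLinearMap.fst ℝ ℝ ℝ)))

lemma hasFDerivAt_one_add_fst (z : ℝ × ℝ) :
    HasFDerivAt (fun w : ℝ × ℝ => 1 + w.1) (ContinuousLinearMap.fst ℝ ℝ ℝ) z :=
  (hasFDerivAt_fst).const_add 1

lemma hasFDerivAt_F1 (hu : ContDiffOn ℝ 2 u (closRect10 L B)) {z : ℝ × ℝ}
    (hz : z ∈ omega10 L B) : HasFDerivAt (F1 L B u) (DF1 L B u z) z := by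
  have hU := hasFDerivAt_u hu hz
  have h :=
    (((hasFDerivAt_one_add_fst z).mul (hU.mul hU)).mul
      ((hasFDerivAt_Wapp hu hz (0, 1)).mul (hasFDerivAt_Wapp hu hz (0, 1)))).neg
  refine h.congr_fderiv ?_
  refine ContinuousLinearMap.ext fun e => ?_
  simp only [DF1, DW, ContinuousLinearMap.neg_apply, ContinuousLinearMap.add_apply,
    ContinuousLinearMap.smul_apply, ContinuousLinearMap.coe_comp', Function.comp_apply,
    ContinuousLinearMap.apply_apply, ContinuousLinearMap.coe_fst', smul_eq_mul, Pi.mul_apply]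
  ring

lemma hasFDerivAt_F2 (hu : ContDiffOn ℝ 2 u (closRect10 L B)) {z : ℝ × ℝ}
    (hz : z ∈ omega10 L B) : HasFDerivAt (F2 L B u) (DF2 L B u z) z := by
  have hU := hasFDerivAt_u hu hz
  have h :=
    ((((hasFDerivAt_one_add_fst z).const_mul 2).mul (hU.mul hU)).mul
        (hasFDerivAt_Wapp hu hz (1, 0))).mul (hasFDerivAt_Wapp hu hz (0, 1))
  refine h.congr_fderiv ?_
  refine ContinuousLinearMap.ext fun e => ?_
  simp only [DF2, DW, ContinuousLinearMap.neg_apply, ContinuousLinearMap.add_apply,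
    ContinuousLinearMap.smul_apply, ContinuousLinearMap.coe_comp', Function.comp_apply,
    ContinuousLinearMap.apply_apply, ContinuousLinearMap.coe_fst', smul_eq_mul, Pi.mul_apply]
  ring

lemma DF1_apply (z : ℝ × ℝ) :
    DF1 L B u z (1, 0)
      = -((1 + z.1) * (u z * u z) * (2 * W L B u z (0, 1)) * W2 L B u z (1, 0) (0, 1)
          + W L B u z (0, 1) * W L B u z (0, 1) *
            (u z * u z + (1 + z.1) * (2 * u z) * W L B u z (1, 0))) := by
  simp only [DF1, DW, ContinuousLinearMap.neg_apply, ContinuousLinearMap.add_apply,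
    ContinuousLinearMap.smul_apply, ContinuousLinearMap.coe_comp', Function.comp_apply,
    ContinuousLinearMap.apply_apply, ContinuousLinearMap.coe_fst', smul_eq_mul]
  ring

lemma DF2_apply (z : ℝ × ℝ) :
    DF2 L B u z (0, 1)
      = 2 * (1 + z.1) * (u z * u z) * W L B u z (1, 0) * W2 L B u z (0, 1) (0, 1)
        + W L B u z (0, 1) * (2 * (1 + z.1) * (u z * u z) * W2 L B u z (0, 1) (1, 0)
            + W L B u z (1, 0) * (2 * (1 + z.1) * (2 * u z) * W L B u z (0, 1))) := by
  simp only [DF2, DW, ContinuousLinearMap.neg_apply, ContinuousLinearMap.add_apply,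
    ContinuousLinearMap.smul_apply, ContinuousLinearMap.coe_comp', Function.comp_apply,
    ContinuousLinearMap.apply_apply, ContinuousLinearMap.coe_fst', smul_eq_mul]
  ring

end Est544

/-- **Integration-by-parts identity (5.44) of Estimate V**: for `u` twice continuously
differentiable on the closure of `Ω = (0,L) × (-B,B)` and vanishing on the boundary of `Ω`,
`2∫_Ω (1+x) u_{yy} u² u_x = ∫_Ω u² u_y² − 2∫_Ω (1+x) u u_x u_y²`. -/
theorem estimate_V_identity (L B : ℝ) (hL : 0 < L) (hB : 0 < B) (u : ℝ × ℝ → ℝ)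
    (hu : ContDiffOn ℝ 2 u (closRect10 L B))
    (hbdy_y : ∀ x ∈ Set.Icc (0 : ℝ) L, u (x, -B) = 0 ∧ u (x, B) = 0)
    (hbdy_x : ∀ y ∈ Set.Icc (-B) B, u ((0 : ℝ), y) = 0 ∧ u (L, y) = 0) :
    2 * (∫ z in omega10 L B,
          (1 + z.1) * pdyy10 L B u z * (u z) ^ 2 * pdx10 L B u z)
      = (∫ z in omega10 L B, (u z) ^ 2 * (pdy10 L B u z) ^ 2)
        - 2 * ∫ z in omega10 L B,
            (1 + z.1) * u z * pdx10 L B u z * (pdy10 L B u z) ^ 2 := by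
  have hBB : -B < B := by linarith
  have huniq : UniqueDiffOn ℝ (closRect10 L B) :=
    (uniqueDiffOn_Icc hL).prod (uniqueDiffOn_Icc hBB)
  have hIcc : Set.Icc ((0 : ℝ), -B) ((L : ℝ), B) = closRect10 L B := by
    rw [closRect10, Set.Icc_prod_Icc]
  have hΩmeas : MeasurableSet (omega10 L B) := Est544.omega_open.measurableSet
  have hsub : omega10 L B ⊆ closRect10 L B := Est544.omega_subset
  -- continuity facts
  have cWc : ContDiffOn ℝ 1 (Est544.W L B u) (closRect10 L B) :=
    hu.fderivWithin huniq (by norm_num)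
  have cW : ContinuousOn (Est544.W L B u) (closRect10 L B) := cWc.continuousOn
  have cW2c : ContDiffOn ℝ 0 (Est544.W2 L B u) (closRect10 L B) :=
    cWc.fderivWithin huniq (by norm_num)
  have cW2 : ContinuousOn (Est544.W2 L B u) (closRect10 L B) := cW2c.continuousOn
  have cU : ContinuousOn u (closRect10 L B) := hu.continuousOn
  have cA : ContinuousOn (fun z : ℝ × ℝ => 1 + z.1) (closRect10 L B) :=
    continuousOn_const.add continuous_fst.continuousOn
  have cP : ContinuousOn (fun z => Est544.W L B u z (1, 0)) (closRect10 L B) :=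
    cW.clm_apply continuousOn_const
  have cQ : ContinuousOn (fun z => Est544.W L B u z (0, 1)) (closRect10 L B) :=
    cW.clm_apply continuousOn_const
  have cMv : ∀ v w : ℝ × ℝ,
      ContinuousOn (fun z => Est544.W2 L B u z v w) (closRect10 L B) :=
    fun v w => (cW2.clm_apply continuousOn_const).clm_apply continuousOn_const
  have hK : IsCompact (closRect10 L B) := by
    rw [closRect10]; exact isCompact_Icc.prod isCompact_Icc
  have cF1 : ContinuousOn (Est544.F1 L B u) (closRect10 L B) := by
    unfold Est544.F1
    exact ((cA.mul (cU.mul cU)).mul (cQ.mul cQ)).neg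
  have cF2 : ContinuousOn (Est544.F2 L B u) (closRect10 L B) := by
    unfold Est544.F2
    exact (((continuousOn_const.mul cA).mul (cU.mul cU)).mul cP).mul cQ
  have cDIV : ContinuousOn
      (fun z => Est544.DF1 L B u z (1, 0) + Est544.DF2 L B u z (0, 1))
      (closRect10 L B) := by
    simp only [Est544.DF1_apply, Est544.DF2_apply]
    apply ContinuousOn.add
    · exact ((((cA.mul (cU.mul cU)).mul (continuousOn_const.mul cQ)).mul
        (cMv (1, 0) (0, 1))).add ((cQ.mul cQ).mul ((cU.mul cU).add
          ((cA.mul (continuousOn_const.mul cU)).mul cP)))).neg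
    · exact ((((continuousOn_const.mul cA).mul (cU.mul cU)).mul cP).mul
        (cMv (0, 1) (0, 1))).add (cQ.mul
          ((((continuousOn_const.mul cA).mul (cU.mul cU)).mul (cMv (0, 1) (1, 0))).add
            (cP.mul (((continuousOn_const.mul cA).mul (continuousOn_const.mul cU)).mul cQ))))
  -- divergence theorem
  have hle : ((0 : ℝ), -B) ≤ ((L : ℝ), B) := ⟨hL.le, show -B ≤ B by linarith⟩
  have key := integral_divergence_prod_Icc_of_hasFDerivAt_off_countable_of_le
    (Est544.F1 L B u) (Est544.F2 L B u) (Est544.DF1 L B u) (Est544.DF2 L B u)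
    ((0 : ℝ), -B) ((L : ℝ), B) hle ∅ Set.countable_empty
    (by rw [hIcc]; exact cF1) (by rw [hIcc]; exact cF2)
    (fun z hz => Est544.hasFDerivAt_F1 hu hz.1)
    (fun z hz => Est544.hasFDerivAt_F2 hu hz.1)
    (by rw [hIcc]; exact cDIV.integrableOn_compact hK)
  have key' : (∫ z in Set.Icc ((0 : ℝ), -B) ((L : ℝ), B),
        (Est544.DF1 L B u z (1, 0) + Est544.DF2 L B u z (0, 1)))
      = (((∫ x in (0 : ℝ)..L, Est544.F2 L B u (x, B))
            - ∫ x in (0 : ℝ)..L, Est544.F2 L B u (x, -B))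
          + ∫ y in (-B)..B, Est544.F1 L B u (L, y))
        - ∫ y in (-B)..B, Est544.F1 L B u (0, y) := key
  -- boundary terms vanish
  have hb1 : (∫ x in (0 : ℝ)..L, Est544.F2 L B u (x, B)) = 0 := by
    have h : Set.EqOn (fun x => Est544.F2 L B u (x, B)) (fun _ => (0 : ℝ))
        (Set.uIcc 0 L) := by
      rw [Set.uIcc_of_le hL.le]
      intro x hx
      simp [Est544.F2, (hbdy_y x hx).2]
    rw [intervalIntegral.integral_congr h]
    simp
  have hb2 : (∫ x in (0 : ℝ)..L, Est544.F2 L B u (x, -B)) = 0 := by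
    have h : Set.EqOn (fun x => Est544.F2 L B u (x, -B)) (fun _ => (0 : ℝ))
        (Set.uIcc 0 L) := by
      rw [Set.uIcc_of_le hL.le]
      intro x hx
      simp [Est544.F2, (hbdy_y x hx).1]
    rw [intervalIntegral.integral_congr h]
    simp
  have hb3 : (∫ y in (-B)..B, Est544.F1 L B u (L, y)) = 0 := by
    have h : Set.EqOn (fun y => Est544.F1 L B u (L, y)) (fun _ => (0 : ℝ))
        (Set.uIcc (-B) B) := by
      rw [Set.uIcc_of_le hBB.le]
      intro y hy
      simp [Est544.F1, (hbdy_x y hy).2]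
    rw [intervalIntegral.integral_congr h]
    simp
  have hb4 : (∫ y in (-B)..B, Est544.F1 L B u (0, y)) = 0 := by
    have h : Set.EqOn (fun y => Est544.F1 L B u (0, y)) (fun _ => (0 : ℝ))
        (Set.uIcc (-B) B) := by
      rw [Set.uIcc_of_le hBB.le]
      intro y hy
      simp [Est544.F1, (hbdy_x y hy).1]
    rw [intervalIntegral.integral_congr h]
    simp
  rw [hb1, hb2, hb3, hb4] at key'
  -- pass to the open rectangle
  have hnull : volume (Set.Icc ((0 : ℝ), -B) ((L : ℝ), B) \ omega10 L B) = 0 := by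
    have hsub2 : Set.Icc ((0 : ℝ), -B) ((L : ℝ), B) \ omega10 L B
        ⊆ (({0, L} : Set ℝ) ×ˢ (Set.univ : Set ℝ))
          ∪ ((Set.univ : Set ℝ) ×ˢ ({-B, B} : Set ℝ)) := by
      rw [hIcc, closRect10]
      rintro ⟨x, y⟩ ⟨⟨hx, hy⟩, hn⟩
      simp only [Set.mem_Icc] at hx hy
      by_cases hxI : x ∈ Set.Ioo (0 : ℝ) L
      · have hyI : y ∉ Set.Ioo (-B) B := fun h => hn ⟨hxI, h⟩
        right
        refine ⟨Set.mem_univ _, ?_⟩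
        simp only [Set.mem_Ioo, not_and_or, not_lt] at hyI
        simp only [Set.mem_insert_iff, Set.mem_singleton_iff]
        rcases hyI with h | h
        · exact Or.inl (le_antisymm h hy.1)
        · exact Or.inr (le_antisymm hy.2 h)
      · left
        refine ⟨?_, Set.mem_univ _⟩
        simp only [Set.mem_Ioo, not_and_or, not_lt] at hxI
        simp only [Set.mem_insert_iff, Set.mem_singleton_iff]
        rcases hxI with h | h
        · exact Or.inl (le_antisymm h hx.1)
        · exact Or.inr (le_antisymm hx.2 h)
    refine measure_mono_null hsub2 (measure_union_null ?_ ?_)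
    · rw [MeasureTheory.Measure.volume_eq_prod, MeasureTheory.Measure.prod_prod]
      have h0L : volume ({0, L} : Set ℝ) = 0 :=
        Set.Countable.measure_zero ((Set.countable_singleton L).insert 0) _
      rw [h0L, zero_mul]
    · rw [MeasureTheory.Measure.volume_eq_prod, MeasureTheory.Measure.prod_prod]
      have h0L : volume ({-B, B} : Set ℝ) = 0 :=
        Set.Countable.measure_zero ((Set.countable_singleton B).insert (-B)) _
      rw [h0L, mul_zero]
  have hae : (Set.Icc ((0 : ℝ), -B) ((L : ℝ), B) : Set (ℝ × ℝ)) =ᵐ[volume]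
      omega10 L B := by
    refine MeasureTheory.ae_eq_set.2 ⟨hnull, ?_⟩
    have : omega10 L B \ Set.Icc ((0 : ℝ), -B) ((L : ℝ), B) = ∅ :=
      Set.diff_eq_empty.2 (by rw [hIcc]; exact hsub)
    rw [this]
    exact measure_empty
  have h0 : (∫ z in omega10 L B,
      (Est544.DF1 L B u z (1, 0) + Est544.DF2 L B u z (0, 1))) = 0 := by
    rw [← setIntegral_congr_set hae]
    rw [key']
    ring
  -- rewrite the integrand on Ω
  have hEq : Set.EqOn (fun z => Est544.DF1 L B u z (1, 0) + Est544.DF2 L B u z (0, 1))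
      (fun z => 2 * ((1 + z.1) * pdyy10 L B u z * u z ^ 2 * pdx10 L B u z)
        + 2 * ((1 + z.1) * u z * pdx10 L B u z * pdy10 L B u z ^ 2)
        - u z ^ 2 * pdy10 L B u z ^ 2) (omega10 L B) := by
    intro z hz
    have hyy : pdyy10 L B u z = Est544.W2 L B u z (0, 1) (0, 1) := by
      rw [pdyy10, iteratedFDerivWithin_two_apply u huniq (hsub hz)]
      simp only [Matrix.cons_val_zero, Matrix.cons_val_one, Matrix.head_cons]
      rfl
    have hsymm := Est544.W2_symm hu hz ((0 : ℝ), (1 : ℝ)) ((1 : ℝ), (0 : ℝ))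
    simp only [Est544.DF1_apply, Est544.DF2_apply, hyy, pdx10, pdy10]
    rw [hsymm]
    simp only [Est544.W, Est544.W2]
    ring
  rw [setIntegral_congr_fun hΩmeas hEq] at h0
  -- integrability of the three pieces
  have hi1 : IntegrableOn
      (fun z => (1 + z.1) * pdyy10 L B u z * u z ^ 2 * pdx10 L B u z)
      (omega10 L B) := by
    have hcont : ContinuousOn
        (fun z => (1 + z.1) * Est544.W2 L B u z (0, 1) (0, 1) * u z ^ 2
          * Est544.W L B u z (1, 0)) (closRect10 L B) :=
      ((cA.mul (cMv (0, 1) (0, 1))).mul (cU.pow 2)).mul cP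
    refine ((hcont.integrableOn_compact hK).mono_set hsub).congr_fun ?_ hΩmeas
    intro z hz
    have hyy : pdyy10 L B u z = Est544.W2 L B u z (0, 1) (0, 1) := by
      rw [pdyy10, iteratedFDerivWithin_two_apply u huniq (hsub hz)]
      simp only [Matrix.cons_val_zero, Matrix.cons_val_one, Matrix.head_cons]
      rfl
    simp only []
    rw [hyy]
    rfl
  have hi3 : IntegrableOn
      (fun z => (1 + z.1) * u z * pdx10 L B u z * pdy10 L B u z ^ 2)
      (omega10 L B) := by
    have hcont : ContinuousOn
        (fun z => (1 + z.1) * u z * Est544.W L B u z (1, 0)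
          * Est544.W L B u z (0, 1) ^ 2) (closRect10 L B) :=
      (((cA.mul cU).mul cP).mul (cQ.pow 2))
    exact (hcont.integrableOn_compact hK).mono_set hsub
  have hi2 : IntegrableOn (fun z => u z ^ 2 * pdy10 L B u z ^ 2) (omega10 L B) := by
    have hcont : ContinuousOn (fun z => u z ^ 2 * Est544.W L B u z (0, 1) ^ 2)
        (closRect10 L B) := (cU.pow 2).mul (cQ.pow 2)
    exact (hcont.integrableOn_compact hK).mono_set hsub
  have hiA : Integrable (fun z : ℝ × ℝ =>
      2 * ((1 + z.1) * pdyy10 L B u z * u z ^ 2 * pdx10 L B u z)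
        + 2 * ((1 + z.1) * u z * pdx10 L B u z * pdy10 L B u z ^ 2))
      (volume.restrict (omega10 L B)) := by
    exact (hi1.const_mul 2).add (hi3.const_mul 2)
  have hiB : Integrable (fun z : ℝ × ℝ =>
      2 * ((1 + z.1) * pdyy10 L B u z * u z ^ 2 * pdx10 L B u z))
      (volume.restrict (omega10 L B)) := by exact hi1.const_mul 2
  have hiC : Integrable (fun z : ℝ × ℝ =>
      2 * ((1 + z.1) * u z * pdx10 L B u z * pdy10 L B u z ^ 2))
      (volume.restrict (omega10 L B)) := by exact hi3.const_mul 2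
  rw [integral_sub hiA hi2, integral_add hiB hiC,
    integral_const_mul, integral_const_mul] at h0
  linarith [h0]
end
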